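/- Let a ∈ ℝ₊^n be a probability vector (entrywise nonnegative with ∑_ℓ a_ℓ = 1) and b ∈ ℝ₊^n an arbitrary nonnegative vector. Define the (unnormalized) relative entropy D(a‖b) = ∑_{ℓ=1}^n (b_ℓ - a_ℓ + a_ℓ·ln(a_ℓ/b_ℓ)) with the conventions 0·ln 0 = 0 and that a term is +∞ if a_ℓ > 0 and b_ℓ = 0. Then D(a‖b) ≥ ‖a - b‖₁ - ln(1 + ‖a - b‖₁). -/

import Mathlib

/-- One term of the unnormalized relative entropy `ρ(a‖b) = b - a + a·ln(a/b)`,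
with the conventions `0·ln 0 = 0` and the term being `+∞` if `a > 0` and `b = 0`. -/
noncomputable def relEntTerm (a b : ℝ) : EReal :=
  if 0 < a ∧ b = 0 then ⊤ else ((b - a + a * Real.log (a / b) : ℝ) : EReal)

open Real Set

noncomputable def gFun (t : ℝ) : ℝ := t - Real.log (1 + t)

lemma gFun_convex : ConvexOn ℝ (Set.Ici (0:ℝ)) gFun := by
  have hA : ConcaveOn ℝ (Set.Ioi (-1:ℝ)) (fun t : ℝ => Real.log (1 + t)) := by
    have h := strictConcaveOn_log_Ioi.concaveOn.comp_affineMap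
      (AffineMap.const ℝ ℝ (1:ℝ) + AffineMap.id ℝ ℝ)
    have hs : (⇑(AffineMap.const ℝ ℝ (1:ℝ) + AffineMap.id ℝ ℝ) ⁻¹' Set.Ioi 0) = Set.Ioi (-1:ℝ) := by
      ext x
      simp [AffineMap.const_apply]
      constructor <;> intro h <;> linarith
    rw [hs] at h
    exact h
  have h2 : ConcaveOn ℝ (Set.Ici (0:ℝ)) (fun t : ℝ => Real.log (1 + t)) :=
    hA.subset (fun x hx => by simp at hx ⊢; linarith) (convex_Ici 0)
  exact (convexOn_id (convex_Ici (0:ℝ))).sub h2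

lemma key_log {u : ℝ} (h0 : 0 ≤ u) (h1 : u < 1) :
    2 * u ≤ Real.log (1 + u) - Real.log (1 - u) := by
  set F : ℝ → ℝ := fun x => Real.log (1 + x) - Real.log (1 - x) - 2 * x with hF
  have hderiv : ∀ x ∈ Set.Ico (0:ℝ) 1, HasDerivAt F ((1+x)⁻¹ + (1-x)⁻¹ - 2) x := by
    intro x hx
    obtain ⟨hx0, hx1⟩ := hx
    have h1x : (0:ℝ) < 1 + x := by linarith
    have h2x : (0:ℝ) < 1 - x := by linarith
    have d1 : HasDerivAt (fun x : ℝ => Real.log (1 + x)) ((1+x)⁻¹) x := by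
      have := (Real.hasDerivAt_log h1x.ne').comp x ((hasDerivAt_id x).const_add 1)
      simp at this; exact this
    have d2 : HasDerivAt (fun x : ℝ => Real.log (1 - x)) (-(1-x)⁻¹) x := by
      have := (Real.hasDerivAt_log h2x.ne').comp x ((hasDerivAt_id x).neg.const_add 1)
      simp at this; exact this
    have d3 : HasDerivAt (fun x : ℝ => 2 * x) 2 x := by
      simpa using (hasDerivAt_id x).const_mul 2
    have := (d1.sub d2).sub d3
    exact this.congr_deriv (by ring)
  have hmono : MonotoneOn F (Set.Ico (0:ℝ) 1) := by
    apply monotoneOn_of_deriv_nonneg (convex_Ico 0 1)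
    · exact fun x hx => ((hderiv x hx).continuousAt.continuousWithinAt)
    · intro x hx
      rw [interior_Ico] at hx
      exact ((hderiv x ⟨le_of_lt hx.1, hx.2⟩).differentiableAt).differentiableWithinAt
    · intro x hx
      rw [interior_Ico] at hx
      obtain ⟨hx0, hx1⟩ := hx
      rw [((hderiv x ⟨le_of_lt hx0, hx1⟩).deriv)]
      have h1x : (0:ℝ) < 1 + x := by linarith
      have h2x : (0:ℝ) < 1 - x := by linarith
      rw [sub_nonneg, inv_eq_one_div, inv_eq_one_div,
        div_add_div _ _ h1x.ne' h2x.ne', le_div_iff₀ (by positivity)]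
      nlinarith
  have := hmono (Set.mem_Ico.2 ⟨le_refl 0, one_pos⟩) (Set.mem_Ico.2 ⟨h0, h1⟩) h0
  simp [hF] at this
  linarith

lemma term_ge (x y : ℝ) (hx : 0 ≤ x) (hy : 0 ≤ y) (hxy : 0 < x → 0 < y) :
    x * gFun (|x - y| / x) + (|x - y| - x * (|x - y| / x)) ≤
      y - x + x * Real.log (x / y) := by
  rcases eq_or_lt_of_le hx with h0 | h0
  · simp [← h0, abs_of_nonneg hy, gFun]
  · have hy0 : 0 < y := hxy h0
    rw [mul_div_cancel₀ _ h0.ne']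
    simp only [sub_self, add_zero]
    rcases le_or_gt x y with hle | hlt
    · -- y ≥ x : equality
      rw [abs_of_nonpos (by linarith)]
      have h1 : 1 + (-(x - y)) / x = y / x := by field_simp; ring
      rw [gFun, h1]
      have hlog : Real.log (y / x) = - Real.log (x / y) := by
        rw [← Real.log_inv]; congr 1; field_simp
      rw [hlog]
      field_simp
      linarith
    · -- x > y
      rw [abs_of_pos (by linarith)]
      set u := (x - y) / x with hu
      have hu0 : 0 ≤ u := div_nonneg (by linarith) h0.le
      have hu1 : u < 1 := by
        rw [hu, div_lt_one h0]; linarith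
      have h1u : 1 - u = y / x := by field_simp [hu]; rw [hu, sub_mul, div_mul_cancel₀ _ h0.ne']; ring
      have hkey := key_log hu0 hu1
      have hlogxy : Real.log (x / y) = - Real.log (1 - u) := by
        rw [h1u, ← Real.log_inv]; congr 1; field_simp
      rw [gFun, hlogxy]
      have hxu : x * u = x - y := by field_simp [hu]; rw [hu, mul_div_cancel₀ _ h0.ne']
      nlinarith [hkey, h0.le]

lemma real_pinsker {n : ℕ} (a b : Fin n → ℝ)
    (ha : ∀ ℓ, 0 ≤ a ℓ) (hb : ∀ ℓ, 0 ≤ b ℓ) (hsum : ∑ ℓ, a ℓ = 1)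
    (hgood : ∀ ℓ, 0 < a ℓ → 0 < b ℓ) :
    (∑ ℓ, |a ℓ - b ℓ|) - Real.log (1 + ∑ ℓ, |a ℓ - b ℓ|) ≤
      ∑ ℓ, (b ℓ - a ℓ + a ℓ * Real.log (a ℓ / b ℓ)) := by
  set V := ∑ ℓ, |a ℓ - b ℓ| with hV
  set t : Fin n → ℝ := fun ℓ => |a ℓ - b ℓ| / a ℓ with ht
  have ht0 : ∀ ℓ, 0 ≤ t ℓ := fun ℓ => div_nonneg (abs_nonneg _) (ha ℓ)
  set T := ∑ ℓ, a ℓ * t ℓ with hT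
  have hterm_le : ∀ ℓ, a ℓ * t ℓ ≤ |a ℓ - b ℓ| := by
    intro ℓ
    rcases eq_or_lt_of_le (ha ℓ) with h | h
    · simp [ht, ← h]
    · rw [ht]; rw [mul_div_cancel₀ _ h.ne']
  have hTV : T ≤ V := Finset.sum_le_sum (fun ℓ _ => hterm_le ℓ)
  have hT0 : 0 ≤ T := Finset.sum_nonneg fun ℓ _ => mul_nonneg (ha ℓ) (ht0 ℓ)
  have hJ : gFun T ≤ ∑ ℓ, a ℓ * gFun (t ℓ) := by
    have := gFun_convex.map_sum_le (t := Finset.univ) (w := a) (p := t)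
      (fun i _ => ha i) hsum (fun i _ => ht0 i)
    simpa [smul_eq_mul] using this
  have hpt : ∀ ℓ, a ℓ * gFun (t ℓ) + (|a ℓ - b ℓ| - a ℓ * t ℓ) ≤
      b ℓ - a ℓ + a ℓ * Real.log (a ℓ / b ℓ) :=
    fun ℓ => term_ge (a ℓ) (b ℓ) (ha ℓ) (hb ℓ) (hgood ℓ)
  have hsum2 : (∑ ℓ, a ℓ * gFun (t ℓ)) + (V - T) ≤
      ∑ ℓ, (b ℓ - a ℓ + a ℓ * Real.log (a ℓ / b ℓ)) := by
    have := Finset.sum_le_sum (fun ℓ (_ : ℓ ∈ Finset.univ) => hpt ℓ)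
    rw [Finset.sum_add_distrib, Finset.sum_sub_distrib] at this
    linarith [this]
  have hlog : Real.log (1 + T) ≤ Real.log (1 + V) :=
    Real.log_le_log (by linarith) (by linarith)
  have : V - Real.log (1 + V) ≤ gFun T + (V - T) := by
    rw [gFun]; linarith
  linarith

lemma ereal_coe_sum {n : ℕ} (s : Finset (Fin n)) (f : Fin n → ℝ) :
    ((∑ i ∈ s, f i : ℝ) : EReal) = ∑ i ∈ s, ((f i : ℝ) : EReal) :=
  map_sum (⟨⟨(fun x : ℝ => (x : EReal)), EReal.coe_zero⟩, fun x y => EReal.coe_add x y⟩ : ℝ →+ EReal) f s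

lemma ereal_sum_ne_bot {n : ℕ} (s : Finset (Fin n)) (f : Fin n → EReal)
    (h : ∀ i, f i ≠ ⊥) : ∑ i ∈ s, f i ≠ ⊥ := by
  classical
  induction s using Finset.induction_on with
  | empty => simp
  | insert _ _ hi ih =>
    rw [Finset.sum_insert hi]
    simp only [ne_eq, EReal.add_eq_bot_iff]
    push_neg
    exact ⟨h _, ih⟩

/-- Generalized Pinsker inequality: `D(a‖b) ≥ ‖a - b‖₁ - ln(1 + ‖a - b‖₁)` for a
probability vector `a` and an arbitrary nonnegative vector `b`. -/
theorem generalized_pinsker {n : ℕ} (a b : Fin n → ℝ)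
    (ha : ∀ ℓ, 0 ≤ a ℓ) (hb : ∀ ℓ, 0 ≤ b ℓ) (hsum : ∑ ℓ, a ℓ = 1) :
    (((∑ ℓ, |a ℓ - b ℓ|) - Real.log (1 + ∑ ℓ, |a ℓ - b ℓ|) : ℝ) : EReal) ≤
      ∑ ℓ, relEntTerm (a ℓ) (b ℓ) := by
  classical
  by_cases hbad : ∃ ℓ, 0 < a ℓ ∧ b ℓ = 0
  · obtain ⟨ℓ0, hℓ0⟩ := hbad
    have htop : ∑ ℓ, relEntTerm (a ℓ) (b ℓ) = ⊤ := by
      rw [← Finset.add_sum_erase _ _ (Finset.mem_univ ℓ0)]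
      rw [show relEntTerm (a ℓ0) (b ℓ0) = ⊤ from if_pos hℓ0]
      apply EReal.top_add_of_ne_bot
      apply ereal_sum_ne_bot
      intro i
      unfold relEntTerm
      split
      · simp
      · exact EReal.coe_ne_bot _
    rw [htop]; exact le_top
  · push_neg at hbad
    have hgood : ∀ ℓ, 0 < a ℓ → 0 < b ℓ :=
      fun ℓ h => lt_of_le_of_ne (hb ℓ) (Ne.symm (hbad ℓ h))
    have heq : ∀ ℓ, relEntTerm (a ℓ) (b ℓ) =
        ((b ℓ - a ℓ + a ℓ * Real.log (a ℓ / b ℓ) : ℝ) : EReal) := by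
      intro ℓ
      unfold relEntTerm
      rw [if_neg]
      rintro ⟨h1, h2⟩
      exact (hbad ℓ h1) h2
    calc (((∑ ℓ, |a ℓ - b ℓ|) - Real.log (1 + ∑ ℓ, |a ℓ - b ℓ|) : ℝ) : EReal)
        ≤ ((∑ ℓ, (b ℓ - a ℓ + a ℓ * Real.log (a ℓ / b ℓ)) : ℝ) : EReal) := by
          exact_mod_cast EReal.coe_le_coe_iff.2 (real_pinsker a b ha hb hsum hgood)
      _ = ∑ ℓ, relEntTerm (a ℓ) (b ℓ) := by
          rw [ereal_coe_sum]
          exact Finset.sum_congr rfl (fun ℓ _ => (heq ℓ).symm)
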